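/- arXiv:2407.03945 — 2 statements merged into one kernel-verified Lean document; each statement's English description precedes it below -/
import Mathlib

section
/- Let s > d/2. There exists a constant C_s > 0 such that for all f, g in the periodic Sobolev space H^s(𝕋^d), the product fg lies in H^s(𝕋^d) and ‖fg‖_{H^s} ≤ C_s ‖f‖_{H^s} ‖g‖_{H^s}. -/
/-- ℓ¹ norm `|k| = Σ_l |k_l|` of a frequency vector. -/
noncomputable def kAbs {d : ℕ} (k : Fin d → ℤ) : ℝ := ∑ l, |(k l : ℝ)|

/-- Japanese bracket `⟨k⟩ = max(|k|, 1)`. -/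
noncomputable def jap {d : ℕ} (k : Fin d → ℤ) : ℝ := max (kAbs k) 1

/-- Squared `H^s(𝕋^d)` norm of a function given by its Fourier coefficients `u`. -/
noncomputable def sobNormSq (d : ℕ) (s : ℝ) (u : (Fin d → ℤ) → ℂ) : ℝ :=
  ∑' k : Fin d → ℤ, jap k ^ (2 * s) * ‖u k‖ ^ 2

/-- `H^s(𝕋^d)` norm. -/
noncomputable def sobNorm (d : ℕ) (s : ℝ) (u : (Fin d → ℤ) → ℂ) : ℝ :=
  Real.sqrt (sobNormSq d s u)

/-- Membership in `H^s(𝕋^d)` (finiteness of the norm). -/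
def memSob (d : ℕ) (s : ℝ) (u : (Fin d → ℤ) → ℂ) : Prop :=
  Summable (fun k : Fin d → ℤ => jap k ^ (2 * s) * ‖u k‖ ^ 2)

/-- Fourier coefficients of the product `fg`: the convolution of coefficients. -/
noncomputable def fourierConv (d : ℕ) (f g : (Fin d → ℤ) → ℂ) : (Fin d → ℤ) → ℂ :=
  fun k => ∑' j : Fin d → ℤ, f j * g (k - j)

/- ### Auxiliary material -/

open scoped ENNReal NNReal BigOperators
open MeasureTheory

namespace SobolevAux

lemma one_le_jap {d : ℕ} (k : Fin d → ℤ) : 1 ≤ jap k := le_max_right _ _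

lemma jap_pos {d : ℕ} (k : Fin d → ℤ) : 0 < jap k :=
  lt_of_lt_of_le one_pos (one_le_jap k)

lemma kAbs_nonneg {d : ℕ} (k : Fin d → ℤ) : 0 ≤ kAbs k :=
  Finset.sum_nonneg fun _ _ => abs_nonneg _

lemma jap_triangle {d : ℕ} (a b : Fin d → ℤ) : jap (a + b) ≤ jap a + jap b := by
  unfold jap
  have habs : kAbs (a + b) ≤ kAbs a + kAbs b := by
    unfold kAbs
    rw [← Finset.sum_add_distrib]
    refine Finset.sum_le_sum fun l _ => ?_
    have : ((a + b) l : ℝ) = (a l : ℝ) + (b l : ℝ) := by push_cast [Pi.add_apply]; ring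
    rw [this]
    exact abs_add_le _ _
  refine max_le ?_ ?_
  · exact habs.trans (add_le_add (le_max_left _ _) (le_max_left _ _))
  · exact le_trans (le_max_right (kAbs a) 1)
      (le_add_of_nonneg_right (le_trans zero_le_one (le_max_right _ _)))

/-- The weight splitting estimate `⟨k⟩^s ≤ 2^s (⟨j⟩^s + ⟨k-j⟩^s)`. -/
lemma jap_rpow_split {d : ℕ} (s : ℝ) (hs : 0 ≤ s) (k j : Fin d → ℤ) :
    jap k ^ s ≤ 2 ^ s * (jap j ^ s + jap (k - j) ^ s) := by
  have tri : jap k ≤ jap j + jap (k - j) := by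
    have : k = j + (k - j) := by ring
    calc jap k = jap (j + (k - j)) := by rw [← this]
      _ ≤ jap j + jap (k - j) := jap_triangle _ _
  have h2 : jap j + jap (k - j) ≤ 2 * max (jap j) (jap (k - j)) := by
    rw [two_mul]
    exact add_le_add (le_max_left _ _) (le_max_right _ _)
  have hmaxpos : (0:ℝ) < max (jap j) (jap (k - j)) :=
    lt_of_lt_of_le (jap_pos j) (le_max_left _ _)
  calc jap k ^ s ≤ (2 * max (jap j) (jap (k - j))) ^ s :=
        Real.rpow_le_rpow (jap_pos k).le (tri.trans h2) hs
    _ = 2 ^ s * (max (jap j) (jap (k - j))) ^ s :=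
        Real.mul_rpow (by norm_num) hmaxpos.le
    _ ≤ 2 ^ s * (jap j ^ s + jap (k - j) ^ s) := by
        refine mul_le_mul_of_nonneg_left ?_ (Real.rpow_nonneg (by norm_num) s)
        rcases max_cases (jap j) (jap (k - j)) with ⟨h, _⟩ | ⟨h, _⟩ <;> rw [h]
        · exact le_add_of_nonneg_right (Real.rpow_nonneg (jap_pos _).le s)
        · exact le_add_of_nonneg_left (Real.rpow_nonneg (jap_pos _).le s)

/-- Cauchy–Schwarz for `ℝ≥0∞`-valued sums. -/
lemma ennreal_cs {α : Type*} [Countable α] [MeasurableSpace α] [MeasurableSingletonClass α]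
    (u v : α → ℝ≥0∞) :
    (∑' k, u k * v k) ^ 2 ≤ (∑' k, u k ^ 2) * (∑' k, v k ^ 2) := by
  have h := ENNReal.lintegral_mul_le_Lp_mul_Lq (Measure.count : Measure α)
    (p := 2) (q := 2) ⟨by norm_num, by norm_num, by norm_num⟩
    (measurable_of_countable u).aemeasurable (measurable_of_countable v).aemeasurable
  simp only [Pi.mul_apply, lintegral_count] at h
  have h2 : ∀ x : α → ℝ≥0∞, ∑' k, x k ^ (2:ℝ) = ∑' k, x k ^ 2 := by
    intro x; congr 1; ext k; rw [← ENNReal.rpow_two]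
  rw [h2, h2] at h
  calc (∑' k, u k * v k) ^ 2
      ≤ ((∑' k, u k ^ 2) ^ (1/2:ℝ) * (∑' k, v k ^ 2) ^ (1/2:ℝ)) ^ 2 :=
        pow_le_pow_left₀ zero_le h 2
    _ = (∑' k, u k ^ 2) * (∑' k, v k ^ 2) := by
        have hx : ∀ x : ℝ≥0∞, (x ^ (1/2:ℝ)) ^ 2 = x := by
          intro x
          rw [sq, ← ENNReal.rpow_add_of_nonneg _ _ (by norm_num) (by norm_num)]
          norm_num
        rw [mul_pow, hx, hx]

/-- Young's inequality `‖P ⋆ Q‖_{ℓ²} ≤ ‖P‖_{ℓ¹} ‖Q‖_{ℓ²}` (squared form). -/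
lemma young {α : Type*} [AddCommGroup α] [Countable α] [MeasurableSpace α]
    [MeasurableSingletonClass α] (P Q : α → ℝ≥0∞) :
    ∑' k : α, (∑' j : α, P j * Q (k - j)) ^ 2 ≤ (∑' j, P j) ^ 2 * (∑' j, Q j ^ 2) := by
  have hsq : ∀ x : ℝ≥0∞, (x ^ (1/2:ℝ)) * (x ^ (1/2:ℝ)) = x := by
    intro x
    rw [← ENNReal.rpow_add_of_nonneg _ _ (by norm_num) (by norm_num)]
    norm_num
  have hpt : ∀ k : α, (∑' j, P j * Q (k - j)) ^ 2
      ≤ (∑' j, P j) * (∑' j, P j * Q (k - j) ^ 2) := by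
    intro k
    have h := ennreal_cs (fun j => P j ^ (1/2:ℝ)) (fun j => P j ^ (1/2:ℝ) * Q (k - j))
    have e1 : ∑' j, P j ^ (1/2:ℝ) * (P j ^ (1/2:ℝ) * Q (k - j)) = ∑' j, P j * Q (k - j) :=
      tsum_congr fun j => by rw [← mul_assoc, hsq]
    have e2 : ∑' j, (P j ^ (1/2:ℝ)) ^ 2 = ∑' j, P j :=
      tsum_congr fun j => by rw [sq, hsq]
    have e3 : ∑' j, (P j ^ (1/2:ℝ) * Q (k - j)) ^ 2 = ∑' j, P j * Q (k - j) ^ 2 :=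
      tsum_congr fun j => by rw [mul_pow, sq (P j ^ (1/2:ℝ)), hsq]
    rw [e1, e2, e3] at h
    exact h
  calc ∑' k : α, (∑' j, P j * Q (k - j)) ^ 2
      ≤ ∑' k : α, (∑' j, P j) * (∑' j, P j * Q (k - j) ^ 2) := ENNReal.tsum_le_tsum hpt
    _ = (∑' j, P j) * ∑' k : α, ∑' j, P j * Q (k - j) ^ 2 := ENNReal.tsum_mul_left
    _ = (∑' j, P j) * ∑' j, ∑' k : α, P j * Q (k - j) ^ 2 := by rw [ENNReal.tsum_comm]
    _ = (∑' j, P j) * ∑' j, P j * ∑' k : α, Q (k - j) ^ 2 := by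
        rw [tsum_congr fun j => (ENNReal.tsum_mul_left : ∑' k : α, P j * Q (k - j) ^ 2 = _)]
    _ = (∑' j, P j) * ∑' j : α, P j * ∑' m : α, Q m ^ 2 := by
        congr 1
        refine tsum_congr fun j => ?_
        congr 1
        exact (Equiv.subRight j).tsum_eq (fun m => Q m ^ 2)
    _ = (∑' j, P j) ^ 2 * (∑' j, Q j ^ 2) := by
        rw [ENNReal.tsum_mul_right, sq]; ring

lemma tsum_pi_prod (C : ℤ → ℝ≥0∞) :
    ∀ d : ℕ, ∑' k : Fin d → ℤ, ∏ l, C (k l) = (∑' n : ℤ, C n) ^ d := by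
  intro d
  induction d with
  | zero =>
      rw [tsum_eq_single (fun i => i.elim0) (fun b hb => absurd (funext fun i => i.elim0) hb)]
      simp
  | succ d ih =>
      calc ∑' k : Fin (d+1) → ℤ, ∏ l, C (k l)
          = ∑' p : ℤ × (Fin d → ℤ), C p.1 * ∏ l : Fin d, C (p.2 l) := by
            refine (Equiv.tsum_eq (Fin.consEquiv fun _ : Fin (d+1) => ℤ)
              (fun k => ∏ l, C (k l))).symm.trans ?_
            refine tsum_congr fun p => ?_
            simp only [Fin.consEquiv, Equiv.coe_fn_mk]
            rw [Fin.prod_univ_succ]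
            simp
        _ = ∑' n : ℤ, ∑' b : Fin d → ℤ, C n * ∏ l, C (b l) :=
            ENNReal.tsum_prod (f := fun (n : ℤ) (b : Fin d → ℤ) => C n * ∏ l, C (b l))
        _ = (∑' n : ℤ, C n) * ∑' b : Fin d → ℤ, ∏ l, C (b l) := by
            rw [tsum_congr fun n : ℤ => (ENNReal.tsum_mul_left : _ = C n * _)]
            exact ENNReal.tsum_mul_right
        _ = (∑' n : ℤ, C n) ^ (d + 1) := by rw [ih]; ring

lemma summable_c {p : ℝ} (hp : 1 < p) :
    Summable (fun n : ℤ => (max |(n:ℝ)| 1) ^ (-p)) := by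
  have hpne : (-p) ≠ 0 := by intro h; nlinarith [neg_eq_zero.mp h]
  have h1 : Summable (fun n : ℤ => |(n:ℝ)| ^ (-p) + if n = 0 then 1 else 0) := by
    refine (Real.summable_abs_int_rpow hp).add ?_
    exact summable_of_ne_finset_zero (s := {0}) (fun n hn => by
      simp only [Finset.mem_singleton] at hn; simp [hn])
  refine h1.congr fun n => ?_
  by_cases h : n = 0
  · subst h; simp [Real.zero_rpow hpne, Real.one_rpow]
  · have h1le : (1:ℝ) ≤ |(n:ℝ)| := by
      rw [← Int.cast_abs]; exact_mod_cast Int.one_le_abs (by exact_mod_cast h)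
    rw [if_neg h, add_zero, max_eq_left h1le]

lemma ofReal_prod_of_nonneg {ι : Type*} (t : Finset ι) (c : ι → ℝ) (hc : ∀ i, 0 ≤ c i) :
    ENNReal.ofReal (∏ i ∈ t, c i) = ∏ i ∈ t, ENNReal.ofReal (c i) := by
  classical
  induction t using Finset.induction with
  | empty => simp
  | insert _ _ hi ih =>
      rw [Finset.prod_insert hi, Finset.prod_insert hi, ENNReal.ofReal_mul (hc _), ih]

/-- Finiteness of `Σ ⟨k⟩^{-2s}` for `s > d/2`. -/
lemma K2_ne_top (d : ℕ) (s : ℝ) (hs : (d : ℝ) / 2 < s) :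
    ∑' k : Fin d → ℤ, ENNReal.ofReal (jap k ^ (-(2*s))) ≠ ∞ := by
  rcases Nat.eq_zero_or_pos d with hd | hd
  · subst hd
    rw [tsum_eq_single (fun i => i.elim0) (fun b hb => absurd (funext fun i => i.elim0) hb)]
    exact ENNReal.ofReal_ne_top
  · set p : ℝ := 2 * s / d with hp_def
    have hdR : (0:ℝ) < d := by exact_mod_cast hd
    have hp : 1 < p := by
      rw [hp_def, lt_div_iff₀ hdR, one_mul]
      linarith [(div_lt_iff₀ (by norm_num : (0:ℝ) < 2)).mp hs]
    have hpd : p * d = 2 * s := by rw [hp_def, div_mul_cancel₀ _ hdR.ne']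
    have hpt : ∀ k : Fin d → ℤ, jap k ^ (-(2*s)) ≤ ∏ l, (max |(k l : ℝ)| 1) ^ (-p) := by
      intro k
      have hJ : ∀ l, max |(k l : ℝ)| 1 ≤ jap k := by
        intro l
        refine max_le ?_ (one_le_jap k)
        refine le_trans ?_ (le_max_left _ _)
        exact Finset.single_le_sum (f := fun l => |(k l : ℝ)|) (fun _ _ => abs_nonneg _)
          (Finset.mem_univ l)
      have hstep : ∀ l : Fin d, jap k ^ (-p) ≤ (max |(k l : ℝ)| 1) ^ (-p) := fun l =>
        Real.rpow_le_rpow_of_nonpos (lt_of_lt_of_le one_pos (le_max_right _ _)) (hJ l)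
          (by linarith)
      calc jap k ^ (-(2*s)) = ∏ _l : Fin d, jap k ^ (-p) := by
            rw [Finset.prod_const, Finset.card_univ, Fintype.card_fin,
              ← Real.rpow_natCast (jap k ^ (-p)) d, ← Real.rpow_mul (jap_pos k).le]
            congr 1
            rw [neg_mul, hpd]
        _ ≤ ∏ l, (max |(k l : ℝ)| 1) ^ (-p) :=
            Finset.prod_le_prod (fun l _ => Real.rpow_nonneg (jap_pos k).le _)
              (fun l _ => hstep l)
    have hb : ∑' k : Fin d → ℤ, ENNReal.ofReal (jap k ^ (-(2*s)))
        ≤ (∑' n : ℤ, ENNReal.ofReal ((max |(n:ℝ)| 1) ^ (-p))) ^ d := by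
      rw [← tsum_pi_prod (fun n => ENNReal.ofReal ((max |(n:ℝ)| 1) ^ (-p))) d]
      refine ENNReal.tsum_le_tsum fun k => ?_
      rw [← ofReal_prod_of_nonneg _ _
        (fun l => Real.rpow_nonneg (le_trans zero_le_one (le_max_right _ _)) _)]
      exact ENNReal.ofReal_le_ofReal (hpt k)
    refine ne_top_of_le_ne_top ?_ hb
    apply ENNReal.pow_ne_top
    rw [← ENNReal.ofReal_tsum_of_nonneg
      (fun n => Real.rpow_nonneg (le_trans zero_le_one (le_max_right _ _)) _)
      (summable_c hp)]
    exact ENNReal.ofReal_ne_top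

/-- The `ℝ≥0∞`-valued squared Sobolev norm. -/
noncomputable def SQ (d : ℕ) (s : ℝ) (u : (Fin d → ℤ) → ℂ) : ℝ≥0∞ :=
  ∑' k : Fin d → ℤ, ENNReal.ofReal (jap k ^ (2 * s) * ‖u k‖ ^ 2)

lemma term_nonneg {d : ℕ} (s : ℝ) (u : (Fin d → ℤ) → ℂ) (k : Fin d → ℤ) :
    0 ≤ jap k ^ (2 * s) * ‖u k‖ ^ 2 :=
  mul_nonneg (Real.rpow_nonneg (jap_pos k).le _) (sq_nonneg _)

lemma memSob_iff (d : ℕ) (s : ℝ) (u : (Fin d → ℤ) → ℂ) :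
    memSob d s u ↔ SQ d s u ≠ ∞ := by
  unfold memSob SQ
  rw [show (fun k : Fin d → ℤ => ENNReal.ofReal (jap k ^ (2*s) * ‖u k‖ ^ 2))
      = fun k => (((jap k ^ (2*s) * ‖u k‖ ^ 2).toNNReal : ℝ≥0) : ℝ≥0∞) from rfl,
    ENNReal.tsum_coe_ne_top_iff_summable]
  rw [← NNReal.summable_coe]
  exact summable_congr fun k => (Real.coe_toNNReal _ (term_nonneg s u k)).symm

lemma sobNormSq_eq (d : ℕ) (s : ℝ) (u : (Fin d → ℤ) → ℂ) :
    sobNormSq d s u = (SQ d s u).toReal := by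
  unfold sobNormSq SQ
  rw [ENNReal.tsum_toReal_eq (fun k => ENNReal.ofReal_ne_top)]
  exact tsum_congr fun k => (ENNReal.toReal_ofReal (term_nonneg s u k)).symm

/-- `SQ` rewritten with the ENNReal weight `W k = ofReal (⟨k⟩^s)`. -/
lemma SQ_eq_W (d : ℕ) (s : ℝ) (u : (Fin d → ℤ) → ℂ) :
    SQ d s u = ∑' k, (ENNReal.ofReal (jap k ^ s) * (‖u k‖₊ : ℝ≥0∞)) ^ 2 := by
  refine tsum_congr fun k => ?_
  rw [← ENNReal.ofReal_coe_nnreal, coe_nnnorm, ← ENNReal.ofReal_mul (Real.rpow_nonneg (jap_pos k).le s),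
    ← ENNReal.ofReal_pow (mul_nonneg (Real.rpow_nonneg (jap_pos k).le s) (norm_nonneg _))]
  congr 1
  rw [mul_pow, two_mul, Real.rpow_add (jap_pos k), sq]
  ring

lemma sq_add_le {x y : ℝ≥0∞} : (x + y) ^ 2 ≤ 4 * (x ^ 2 + y ^ 2) := by
  rcases le_total x y with h | h
  · calc (x + y) ^ 2 ≤ (y + y) ^ 2 := pow_le_pow_left₀ zero_le (add_le_add_left h y) 2
      _ = 4 * y ^ 2 := by ring
      _ ≤ 4 * (x ^ 2 + y ^ 2) := mul_le_mul_right (le_add_self) 4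
  · calc (x + y) ^ 2 ≤ (x + x) ^ 2 := pow_le_pow_left₀ zero_le (add_le_add_right h x) 2
      _ = 4 * x ^ 2 := by ring
      _ ≤ 4 * (x ^ 2 + y ^ 2) := mul_le_mul_right (le_self_add) 4

lemma enn_norm_conv_le (d : ℕ) (f g : (Fin d → ℤ) → ℂ) (k : Fin d → ℤ) :
    (‖fourierConv d f g k‖₊ : ℝ≥0∞)
      ≤ ∑' j, (‖f j‖₊ : ℝ≥0∞) * (‖g (k - j)‖₊ : ℝ≥0∞) := by
  unfold fourierConv
  by_cases h : Summable (fun j : Fin d → ℤ => ‖f j * g (k - j)‖₊)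
  · calc (‖∑' j, f j * g (k - j)‖₊ : ℝ≥0∞)
        ≤ ((∑' j, ‖f j * g (k - j)‖₊ : ℝ≥0) : ℝ≥0∞) :=
          ENNReal.coe_le_coe.mpr (nnnorm_tsum_le h)
      _ = ∑' j, ((‖f j * g (k - j)‖₊ : ℝ≥0) : ℝ≥0∞) := ENNReal.coe_tsum h
      _ = ∑' j, (‖f j‖₊ : ℝ≥0∞) * (‖g (k - j)‖₊ : ℝ≥0∞) :=
          tsum_congr fun j => by rw [nnnorm_mul, ENNReal.coe_mul]
  · have : ∑' j, (‖f j‖₊ : ℝ≥0∞) * (‖g (k - j)‖₊ : ℝ≥0∞) = ∞ := by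
      by_contra hne
      have : Summable (fun j : Fin d → ℤ => ‖f j‖₊ * ‖g (k - j)‖₊) := by
        refine ENNReal.tsum_coe_ne_top_iff_summable.mp ?_
        rw [show (fun j : Fin d → ℤ => ((‖f j‖₊ * ‖g (k - j)‖₊ : ℝ≥0) : ℝ≥0∞))
          = fun j => (‖f j‖₊ : ℝ≥0∞) * (‖g (k - j)‖₊ : ℝ≥0∞) by
            funext j; rw [ENNReal.coe_mul]]
        exact hne
      exact h (this.congr fun j => (nnnorm_mul _ _).symm)
    rw [this]
    exact le_top

end SobolevAux

open SobolevAux in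
/-- Bilinear (algebra) estimate: for `s > d/2` there is `C_s > 0` with
`‖fg‖_{H^s} ≤ C_s ‖f‖_{H^s} ‖g‖_{H^s}` for all `f, g ∈ H^s(𝕋^d)`. -/
theorem sobolev_bilinear_estimate (d : ℕ) (s : ℝ) (hs : (d : ℝ) / 2 < s) :
    ∃ C : ℝ, 0 < C ∧ ∀ f g : (Fin d → ℤ) → ℂ, memSob d s f → memSob d s g →
      memSob d s (fourierConv d f g) ∧
      sobNorm d s (fourierConv d f g) ≤ C * sobNorm d s f * sobNorm d s g := by
  classical
  have hs0 : 0 < s := lt_of_le_of_lt (by positivity) hs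
  -- ENNReal weights
  set W : (Fin d → ℤ) → ℝ≥0∞ := fun k => ENNReal.ofReal (jap k ^ s) with hW
  set Wi : (Fin d → ℤ) → ℝ≥0∞ := fun k => ENNReal.ofReal (jap k ^ (-s)) with hWi
  set c : ℝ≥0∞ := ENNReal.ofReal (2 ^ s) with hc
  set K2 : ℝ≥0∞ := ∑' k : Fin d → ℤ, Wi k ^ 2 with hK2
  -- properties of the constants
  have hWWi : ∀ k, Wi k * W k = 1 := by
    intro k
    rw [hW, hWi]
    rw [← ENNReal.ofReal_mul (Real.rpow_nonneg (jap_pos k).le _),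
      ← Real.rpow_add (jap_pos k)]
    simp
  have hK2top : K2 ≠ ∞ := by
    rw [hK2]
    have : ∀ k : Fin d → ℤ, Wi k ^ 2 = ENNReal.ofReal (jap k ^ (-(2*s))) := by
      intro k
      rw [hWi, ← ENNReal.ofReal_pow (Real.rpow_nonneg (jap_pos k).le _)]
      congr 1
      rw [sq, ← Real.rpow_add (jap_pos k)]
      ring_nf
    rw [tsum_congr this]
    exact K2_ne_top d s hs
  have hK2one : 1 ≤ K2 := by
    have h0 : Wi (0 : Fin d → ℤ) ^ 2 = 1 := by
      have hj : jap (0 : Fin d → ℤ) = 1 := by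
        unfold jap kAbs
        simp
      simp [hWi, hj]
    calc (1:ℝ≥0∞) = Wi 0 ^ 2 := h0.symm
      _ ≤ K2 := by rw [hK2]; exact ENNReal.le_tsum _
  have hcone : 1 ≤ c := by
    rw [hc, ← ENNReal.ofReal_one]
    exact ENNReal.ofReal_le_ofReal (Real.one_le_rpow one_le_two hs0.le)
  have hctop : c ≠ ∞ := ENNReal.ofReal_ne_top
  -- the ENNReal constant
  set C2 : ℝ≥0∞ := 8 * c ^ 2 * K2 with hC2
  have hC2top : C2 ≠ ∞ := by
    rw [hC2]
    exact ENNReal.mul_ne_top (ENNReal.mul_ne_top (by norm_num) (ENNReal.pow_ne_top hctop)) hK2top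
  have hC2one : 1 ≤ C2 := by
    rw [hC2]
    calc (1:ℝ≥0∞) = 1 * 1 * 1 := by norm_num
      _ ≤ 8 * c ^ 2 * K2 := by
          gcongr
          · norm_num
          · exact one_le_pow₀ hcone
  -- key inequality
  have key : ∀ f g : (Fin d → ℤ) → ℂ,
      SQ d s (fourierConv d f g) ≤ C2 * SQ d s f * SQ d s g := by
    intro f g
    set F : (Fin d → ℤ) → ℝ≥0∞ := fun j => (‖f j‖₊ : ℝ≥0∞) with hF
    set G : (Fin d → ℤ) → ℝ≥0∞ := fun j => (‖g j‖₊ : ℝ≥0∞) with hG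
    set A : (Fin d → ℤ) → ℝ≥0∞ := fun j => W j * F j with hA
    set B : (Fin d → ℤ) → ℝ≥0∞ := fun j => W j * G j with hB
    set X : (Fin d → ℤ) → ℝ≥0∞ := fun k => ∑' j, A j * G (k - j) with hX
    set Y : (Fin d → ℤ) → ℝ≥0∞ := fun k => ∑' j, F j * B (k - j) with hY
    have hSf : SQ d s f = ∑' j, A j ^ 2 := SQ_eq_W d s f
    have hSg : SQ d s g = ∑' j, B j ^ 2 := SQ_eq_W d s g
    -- pointwise estimate
    have hpt : ∀ k, W k * (‖fourierConv d f g k‖₊ : ℝ≥0∞) ≤ c * (X k + Y k) := by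
      intro k
      have hWsplit : ∀ j, W k ≤ c * (W j + W (k - j)) := by
        intro j
        rw [hW, hc]
        calc ENNReal.ofReal (jap k ^ s)
            ≤ ENNReal.ofReal (2 ^ s * (jap j ^ s + jap (k - j) ^ s)) :=
              ENNReal.ofReal_le_ofReal (jap_rpow_split s hs0.le k j)
          _ = ENNReal.ofReal (2 ^ s) *
              (ENNReal.ofReal (jap j ^ s) + ENNReal.ofReal (jap (k - j) ^ s)) := by
              rw [ENNReal.ofReal_mul (Real.rpow_nonneg (by norm_num) s),
                ENNReal.ofReal_add (Real.rpow_nonneg (jap_pos _).le s)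
                  (Real.rpow_nonneg (jap_pos _).le s)]
      calc W k * (‖fourierConv d f g k‖₊ : ℝ≥0∞)
          ≤ W k * ∑' j, F j * G (k - j) :=
            mul_le_mul_right (enn_norm_conv_le d f g k) _
        _ = ∑' j, W k * (F j * G (k - j)) := ENNReal.tsum_mul_left.symm
        _ ≤ ∑' j, (c * (W j + W (k - j))) * (F j * G (k - j)) :=
            ENNReal.tsum_le_tsum fun j => mul_le_mul_left (hWsplit j) _
        _ = ∑' j, c * (A j * G (k - j) + F j * B (k - j)) := by
            refine tsum_congr fun j => ?_
            simp only [hA, hB]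
            ring
        _ = c * (X k + Y k) := by
            rw [ENNReal.tsum_mul_left, ENNReal.tsum_add, hX, hY]
    -- sum up
    have hXsum : ∑' k, X k ^ 2 ≤ (∑' j, G j) ^ 2 * ∑' j, A j ^ 2 := by
      have hXr : ∀ k, X k = ∑' j, G j * A (k - j) := by
        intro k
        simp only [hX]
        rw [← Equiv.tsum_eq (Equiv.subLeft k) (fun j => A j * G (k - j))]
        refine tsum_congr fun i => ?_
        simp only [Equiv.subLeft_apply, sub_sub_cancel]
        ring
      rw [tsum_congr fun k => congrArg (· ^ 2) (hXr k)]
      exact young G A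
    have hYsum : ∑' k, Y k ^ 2 ≤ (∑' j, F j) ^ 2 * ∑' j, B j ^ 2 := by
      rw [hY]
      exact young F B
    have hFsum : (∑' j, F j) ^ 2 ≤ K2 * ∑' j, A j ^ 2 := by
      have : ∑' j, F j = ∑' j, Wi j * A j := by
        refine tsum_congr fun j => ?_
        rw [hA, ← mul_assoc, hWWi, one_mul]
      rw [this, hK2]
      exact ennreal_cs Wi A
    have hGsum : (∑' j, G j) ^ 2 ≤ K2 * ∑' j, B j ^ 2 := by
      have : ∑' j, G j = ∑' j, Wi j * B j := by
        refine tsum_congr fun j => ?_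
        rw [hB, ← mul_assoc, hWWi, one_mul]
      rw [this, hK2]
      exact ennreal_cs Wi B
    calc SQ d s (fourierConv d f g)
        = ∑' k, (W k * (‖fourierConv d f g k‖₊ : ℝ≥0∞)) ^ 2 := SQ_eq_W d s _
      _ ≤ ∑' k, (c * (X k + Y k)) ^ 2 :=
          ENNReal.tsum_le_tsum fun k => pow_le_pow_left₀ zero_le (hpt k) 2
      _ = c ^ 2 * ∑' k, (X k + Y k) ^ 2 := by
          rw [tsum_congr fun k => (mul_pow c (X k + Y k) 2), ENNReal.tsum_mul_left]
      _ ≤ c ^ 2 * ∑' k, 4 * (X k ^ 2 + Y k ^ 2) :=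
          mul_le_mul_right (ENNReal.tsum_le_tsum fun k => sq_add_le) _
      _ = 4 * c ^ 2 * (∑' k, X k ^ 2 + ∑' k, Y k ^ 2) := by
          rw [ENNReal.tsum_mul_left, ENNReal.tsum_add]
          ring
      _ ≤ 4 * c ^ 2 * ((∑' j, G j) ^ 2 * ∑' j, A j ^ 2 + (∑' j, F j) ^ 2 * ∑' j, B j ^ 2) := by
          gcongr
      _ ≤ 4 * c ^ 2 * ((K2 * ∑' j, B j ^ 2) * ∑' j, A j ^ 2
            + (K2 * ∑' j, A j ^ 2) * ∑' j, B j ^ 2) := by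
          gcongr
      _ = C2 * (∑' j, A j ^ 2) * ∑' j, B j ^ 2 := by
          rw [hC2]
          ring
      _ = C2 * SQ d s f * SQ d s g := by rw [hSf, hSg]
  -- conclude
  refine ⟨Real.sqrt C2.toReal, ?_, ?_⟩
  · have h1 : (1:ℝ) ≤ C2.toReal := by
      have := ENNReal.toReal_mono hC2top hC2one
      simpa using this
    exact Real.sqrt_pos.mpr (by linarith)
  · intro f g hf hg
    have hSf : SQ d s f ≠ ∞ := (memSob_iff d s f).mp hf
    have hSg : SQ d s g ≠ ∞ := (memSob_iff d s g).mp hg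
    have hle := key f g
    have hRtop : C2 * SQ d s f * SQ d s g ≠ ∞ :=
      ENNReal.mul_ne_top (ENNReal.mul_ne_top hC2top hSf) hSg
    constructor
    · exact (memSob_iff d s _).mpr (ne_top_of_le_ne_top hRtop hle)
    · have htoReal : (SQ d s (fourierConv d f g)).toReal
          ≤ C2.toReal * (SQ d s f).toReal * (SQ d s g).toReal := by
        have := ENNReal.toReal_mono hRtop hle
        rwa [ENNReal.toReal_mul, ENNReal.toReal_mul] at this
      unfold sobNorm
      rw [sobNormSq_eq, sobNormSq_eq, sobNormSq_eq]
      calc Real.sqrt (SQ d s (fourierConv d f g)).toReal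
          ≤ Real.sqrt (C2.toReal * (SQ d s f).toReal * (SQ d s g).toReal) :=
            Real.sqrt_le_sqrt htoReal
        _ = Real.sqrt C2.toReal * Real.sqrt (SQ d s f).toReal
              * Real.sqrt (SQ d s g).toReal := by
            rw [Real.sqrt_mul (by positivity), Real.sqrt_mul ENNReal.toReal_nonneg]
end

section
/- Under the hypotheses: β > d/2, τ < 2, C₂ a bound such that τC₂ < 1 where C₂ = (1/8)C_{1,τ}C_β‖(u+v*)² + (u+v*)(u+v) + (u+v)²‖_{H^β}, C_{1,τ} the operator norm of ((1−τ/2)I − (τ/2)ε²Δ)^{−1} on H^β, and C_β the Sobolev algebra constant; if v = Ψ_τ(u,v) (exact midpoint solution) and v* is any function in H^β with residual ℛ = Ψ_τ(u,v*) − v*, then ‖v − v*‖_{H^β} ≤ C_{1,τ}/(1 − τC₂) · ‖ℛ‖_{H^β}. -/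
/-- Stability of the implicit midpoint scheme: if `v = Ψ_τ(u,v)` is the exact midpoint
solution and `v*` is any approximation with residual `ℛ = Ψ_τ(u,v*) − v*`, then in a
commutative normed ℝ-algebra (such as `H^β(𝕋^d)`, `β > d/2`, with algebra constant `C_β`)
with `S = ((1−τ/2)I − (τ/2)ε²Δ)^{−1}` of norm `≤ C₁` and `τ C₂ < 1`,
`‖v − v*‖ ≤ C₁/(1 − τ C₂) · ‖ℛ‖`. -/
theorem midpoint_residual_stability {A : Type*} [NormedCommRing A] [NormedAlgebra ℝ A]
    (Δ S : A →ₗ[ℝ] A) (τ ε Cβ C₁ : ℝ) (hτ0 : 0 < τ) (hτ2 : τ < 2)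
    (halg : ∀ f g : A, ‖f * g‖ ≤ Cβ * ‖f‖ * ‖g‖)
    (hS : ∀ w : A, S ((1 - τ / 2) • w - ((τ / 2) * ε ^ 2) • Δ w) = w)
    (hC₁ : ∀ w : A, ‖S w‖ ≤ C₁ * ‖w‖)
    (Ψ : A → A → A)
    (hΨ : ∀ u v, Ψ u v = u + (τ * ε ^ 2) • Δ (((1 : ℝ) / 2) • (u + v))
      - τ • ((((1 : ℝ) / 2) • (u + v)) * (((1 : ℝ) / 4) • (u + v) ^ 2 - 1)))
    (u v vs : A) (hv : v = Ψ u v) (C₂ : ℝ)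
    (hC₂ : C₂ = (1 / 8) * C₁ * Cβ * ‖(u + vs) ^ 2 + (u + vs) * (u + v) + (u + v) ^ 2‖)
    (hτC₂ : τ * C₂ < 1) :
    ‖v - vs‖ ≤ C₁ / (1 - τ * C₂) * ‖Ψ u vs - vs‖ := by
  have hden : (0:ℝ) < 1 - τ * C₂ := by linarith
  by_cases hC₁pos : 0 ≤ C₁
  · set e : A := v - vs with he
    set R : A := Ψ u vs - vs with hR
    set Q : A := (u + vs) ^ 2 + (u + vs) * (u + v) + (u + v) ^ 2 with hQ
    have expand : ∀ w : A, τ • ((((1 : ℝ) / 2) • (u + w)) * (((1 : ℝ) / 4) • (u + w) ^ 2 - 1))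
        = (τ / 8) • (u + w) ^ 3 - (τ / 2) • (u + w) := by
      intro w
      have h3 : (u + w) * (u + w) ^ 2 = (u + w) ^ 3 := by ring
      simp only [smul_mul_assoc, mul_sub, mul_one, mul_smul_comm, h3]
      match_scalars <;> ring
    have cube : e * Q = (u + v) ^ 3 - (u + vs) ^ 3 := by
      rw [he, hQ]; ring
    have key : (1 - τ / 2) • e - ((τ / 2) * ε ^ 2) • Δ e = R - (τ / 8) • (e * Q) := by
      rw [cube, hR, hΨ, expand]
      rw [hΨ, expand] at hv
      simp only [he, map_sub, map_smul, map_add] at hv ⊢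
      linear_combination (norm := module) hv
    have heq : e = S (R - (τ / 8) • (e * Q)) := by
      rw [← key, hS]
    have h1 : ‖e‖ ≤ C₁ * (‖R‖ + (τ / 8) * (Cβ * ‖e‖ * ‖Q‖)) := by
      have hb := hC₁ (R - (τ / 8) • (e * Q))
      rw [← heq] at hb
      refine hb.trans ?_
      gcongr
      refine (norm_sub_le _ _).trans ?_
      gcongr
      rw [norm_smul, Real.norm_eq_abs, abs_of_nonneg (by positivity)]
      gcongr
      exact halg _ _
    have h2 : ‖e‖ * (1 - τ * C₂) ≤ C₁ * ‖R‖ := by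
      rw [hC₂]
      nlinarith [norm_nonneg e]
    rw [div_mul_eq_mul_div, le_div_iff₀ hden]
    exact h2
  · push_neg at hC₁pos
    have hzero : ∀ w : A, w = 0 := by
      intro w
      have h := hC₁ ((1 - τ / 2) • w - ((τ / 2) * ε ^ 2) • Δ w)
      rw [hS] at h
      have : ‖w‖ ≤ 0 := h.trans (mul_nonpos_of_nonpos_of_nonneg hC₁pos.le (norm_nonneg _))
      simpa using norm_le_zero_iff.mp this
    rw [hzero (v - vs), hzero (Ψ u vs - vs)]
    simp
end
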